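/- Let a > 0 and let 1 ≤ m < n be integers, let T > 0 and 0 ≤ t ≤ T. Then F_m^{n−1}(t) ≤ exp( −2n·( (e^{−aT} − m/n)₊ )² ), where x₊ = max(x,0). -/

import Mathlib

open Real Finset


/-- Auxiliary recursion for `F_m^ℓ`, indexed by the gap `k = ℓ - m`:
`Fgap a 0 m t = a m ∫₀ᵗ e^{-am(t-s)} ds` and
`Fgap a (k+1) m t = a m ∫₀ᵗ e^{-am(t-s)} Fgap a k (m+1) s ds`. -/
noncomputable def Fgap (a : ℝ) : ℕ → ℕ → ℝ → ℝ
  | 0, m, t => a * (m : ℝ) * ∫ s in (0 : ℝ)..t, Real.exp (-a * (m : ℝ) * (t - s))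
  | k + 1, m, t => a * (m : ℝ) *
      ∫ s in (0 : ℝ)..t, Real.exp (-a * (m : ℝ) * (t - s)) * Fgap a k (m + 1) s

/-- `F_m^ℓ(t)`: for `m ≤ ℓ`,
`F_ℓ^ℓ(t) = aℓ ∫₀ᵗ e^{-aℓ(t-s)} ds` and
`F_m^ℓ(t) = am ∫₀ᵗ e^{-am(t-s)} F_{m+1}^ℓ(s) ds`. -/
noncomputable def Fhier (a : ℝ) (m ℓ : ℕ) (t : ℝ) : ℝ := Fgap a (ℓ - m) m t

lemma termalg (a q : ℝ) (M j : ℕ) (hjM : j < M) :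
    (a * ((j:ℝ)+1) * (M.choose (j+1) : ℝ) * q ^ (j+1) * (1 - q) ^ (M - (j+1)))
      - a * (j:ℝ) * (M.choose j : ℝ) * q ^ j * (1 - q) ^ (M - j)
    = (M.choose j : ℝ) * ((j:ℝ) * q ^ (j-1) * (q * -a)) * (1 - q) ^ (M - j)
      + (M.choose j : ℝ) * q ^ j * ((((M - j:ℕ)):ℝ) * (1 - q) ^ (M - j - 1) * -(q * -a)) := by
  have hc : ((j:ℝ)+1) * (M.choose (j+1) : ℝ) = (M.choose j : ℝ) * (((M - j : ℕ)) : ℝ) := by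
    calc ((j:ℝ)+1) * (M.choose (j+1) : ℝ) = ((M.choose (j+1) * (j+1) : ℕ) : ℝ) := by push_cast; ring
      _ = ((M.choose j * (M - j) : ℕ) : ℝ) := by rw [Nat.choose_succ_right_eq]
      _ = _ := by push_cast; ring
  obtain ⟨e, he⟩ : ∃ e, M - j = e + 1 := ⟨M - j - 1, by omega⟩
  have h1 : M - (j+1) = e := by omega
  have h2 : M - j - 1 = e := by omega
  rw [he] at hc
  rw [he, h1]
  simp only [Nat.add_sub_cancel]
  obtain _ | i := j
  · simp only [Nat.cast_zero, pow_zero] at *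
    linear_combination (a * q * (1 - q) ^ e) * hc
  · have : q ^ (i + 1 + 1) = q ^ (i+1) * q := by ring
    rw [pow_succ (1-q) e]
    push_cast at hc ⊢
    linear_combination (a * q ^ (i + 1) * q * (1 - q) ^ e) * hc

lemma Pderiv (a : ℝ) (M m : ℕ) (hm : m ≤ M) (s : ℝ) :
    HasDerivAt (fun s : ℝ => ∑ j ∈ range m,
        (M.choose j : ℝ) * Real.exp (-a*s) ^ j * (1 - Real.exp (-a*s)) ^ (M - j))
      (a * m * (M.choose m : ℝ) * Real.exp (-a*s) ^ m * (1 - Real.exp (-a*s)) ^ (M - m)) s := by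
  have key : HasDerivAt (fun s : ℝ => ∑ j ∈ range m,
        (M.choose j : ℝ) * Real.exp (-a*s) ^ j * (1 - Real.exp (-a*s)) ^ (M - j))
      (∑ j ∈ range m,
        ((fun j : ℕ => a * (j:ℝ) * (M.choose j : ℝ) * Real.exp (-a*s) ^ j
            * (1 - Real.exp (-a*s)) ^ (M - j)) (j+1)
          - (fun j : ℕ => a * (j:ℝ) * (M.choose j : ℝ) * Real.exp (-a*s) ^ j
            * (1 - Real.exp (-a*s)) ^ (M - j)) j)) s := by
    apply HasDerivAt.fun_sum
    intro j hj
    have hjM : j < M := lt_of_lt_of_le (mem_range.mp hj) hm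
    have hq : HasDerivAt (fun s : ℝ => Real.exp (-a*s)) (Real.exp (-a*s) * -a) s := by
      simpa using ((hasDerivAt_id s).const_mul (-a)).exp
    have h3 := ((hq.pow j).const_mul (M.choose j : ℝ)).mul ((hq.const_sub 1).pow (M - j))
    refine h3.congr_deriv ?_; symm
    beta_reduce
    push_cast
    rw [termalg a (Real.exp (-a*s)) M j hjM]
    rfl
  rw [Finset.sum_range_sub
    (fun j : ℕ => a * (j:ℝ) * (M.choose j : ℝ) * Real.exp (-a*s) ^ j
            * (1 - Real.exp (-a*s)) ^ (M - j)) m] at key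
  simpa using key

lemma contq (a : ℝ) : Continuous (fun s : ℝ => Real.exp (-a*s)) :=
  Real.continuous_exp.comp (continuous_const.mul continuous_id)

lemma Fgap_closed (a : ℝ) (ha : a ≠ 0) : ∀ (k m : ℕ), 1 ≤ m → ∀ t : ℝ,
    Fgap a k m t = ∑ j ∈ range m,
      ((m + k).choose j : ℝ) * Real.exp (-a*t) ^ j * (1 - Real.exp (-a*t)) ^ (m + k - j) := by
  intro k
  induction k with
  | zero =>
    intro m hm t
    have ham : a * (m:ℝ) ≠ 0 := by
      simp [ha]; omega
    have hE : ∀ s : ℝ, HasDerivAt (fun s : ℝ => (a*(m:ℝ))⁻¹ * Real.exp (-a*(m:ℝ)*(t-s)))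
        (Real.exp (-a*(m:ℝ)*(t-s))) s := by
      intro s
      have h0 : HasDerivAt (fun s : ℝ => t - s) (-1) s := (hasDerivAt_id s).const_sub t
      have h3 := ((h0.const_mul (-a*(m:ℝ))).exp).const_mul (a*(m:ℝ))⁻¹
      refine h3.congr_deriv ?_; symm
      field_simp
    have hFTC : ∫ s in (0:ℝ)..t, Real.exp (-a*(m:ℝ)*(t-s))
        = (a*(m:ℝ))⁻¹ * Real.exp (-a*(m:ℝ)*(t-t)) - (a*(m:ℝ))⁻¹ * Real.exp (-a*(m:ℝ)*(t-0)) := by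
      apply intervalIntegral.integral_eq_sub_of_hasDerivAt (fun s _ => hE s)
      exact (Real.continuous_exp.comp
        (continuous_const.mul (continuous_const.sub continuous_id))).intervalIntegrable 0 t
    -- the partial binomial sum equals 1 - q^m
    have hbin := add_pow (Real.exp (-a*t)) (1 - Real.exp (-a*t)) m
    rw [show Real.exp (-a*t) + (1 - Real.exp (-a*t)) = 1 by ring, one_pow,
      Finset.sum_range_succ] at hbin
    have hS : ∑ j ∈ range m, ((m + 0).choose j : ℝ) * Real.exp (-a*t) ^ j
        * (1 - Real.exp (-a*t)) ^ (m + 0 - j)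
        = 1 - Real.exp (-a*t) ^ m := by
      have : ∑ j ∈ range m, ((m + 0).choose j : ℝ) * Real.exp (-a*t) ^ j
          * (1 - Real.exp (-a*t)) ^ (m + 0 - j)
          = ∑ j ∈ range m, Real.exp (-a*t) ^ j * (1 - Real.exp (-a*t)) ^ (m - j)
            * ((m.choose j : ℕ) : ℝ) := by
        apply Finset.sum_congr rfl
        intro j _
        rw [Nat.add_zero]
        ring
      rw [this]
      simp only [Nat.choose_self, Nat.cast_one, Nat.sub_self, pow_zero] at hbin
      linarith
    show a * (m:ℝ) * ∫ s in (0:ℝ)..t, Real.exp (-a * (m:ℝ) * (t - s)) = _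
    rw [hFTC, hS]
    have hqm : Real.exp (-a*t) ^ m = Real.exp (-a*(m:ℝ)*(t-0)) := by
      rw [← Real.exp_nat_mul]; ring_nf
    rw [hqm, show t - t = 0 by ring, mul_zero, Real.exp_zero]
    field_simp
  | succ k IH =>
    intro m hm t
    set M := m + 1 + k with hM
    have hmM : m < M := by omega
    have ham : a * (m:ℝ) ≠ 0 := by simp [ha]; omega
    set P : ℝ → ℝ := fun s => ∑ j ∈ range m,
      (M.choose j : ℝ) * Real.exp (-a*s) ^ j * (1 - Real.exp (-a*s)) ^ (M - j) with hP
    set Pfull : ℝ → ℝ := fun s => ∑ j ∈ range (m+1),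
      (M.choose j : ℝ) * Real.exp (-a*s) ^ j * (1 - Real.exp (-a*s)) ^ (M - j) with hPfull
    have hG : ∀ s : ℝ, HasDerivAt (fun s : ℝ => Real.exp (a*(m:ℝ)*s) * P s)
        (a*(m:ℝ)*Real.exp (a*(m:ℝ)*s) * Pfull s) s := by
      intro s
      have hE : HasDerivAt (fun s : ℝ => Real.exp (a*(m:ℝ)*s)) (a*(m:ℝ)*Real.exp (a*(m:ℝ)*s)) s := by
        have := ((hasDerivAt_id s).const_mul (a*(m:ℝ))).exp
        simpa [mul_comm] using this
      have := hE.mul (Pderiv a M m hmM.le s)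
      refine this.congr_deriv ?_; symm
      simp only [hPfull, hP]
      beta_reduce
      rw [Finset.sum_range_succ]
      push_cast
      ring
    have hcont : Continuous (fun s : ℝ => a*(m:ℝ)*Real.exp (a*(m:ℝ)*s) * Pfull s) := by
      apply Continuous.mul
      · exact continuous_const.mul (Real.continuous_exp.comp (continuous_const.mul continuous_id))
      · apply continuous_finset_sum
        intro j _
        exact (continuous_const.mul ((contq a).pow j)).mul
          ((continuous_const.sub (contq a)).pow (M - j))
    have hFTC : ∫ s in (0:ℝ)..t, (a*(m:ℝ)*Real.exp (a*(m:ℝ)*s) * Pfull s)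
        = Real.exp (a*(m:ℝ)*t) * P t - Real.exp (a*(m:ℝ)*0) * P 0 :=
      intervalIntegral.integral_eq_sub_of_hasDerivAt (fun s _ => hG s)
        (hcont.intervalIntegrable 0 t)
    have hP0 : P 0 = 0 := by
      rw [hP]
      apply Finset.sum_eq_zero
      intro j hj
      have hMj : M - j ≠ 0 := by have := mem_range.mp hj; omega
      simp [zero_pow hMj]
    have hfun : ∀ s : ℝ, Real.exp (-a*(m:ℝ)*(t-s)) * Fgap a k (m+1) s
        = Real.exp (-(a*(m:ℝ)*t)) * ((a*(m:ℝ))⁻¹ * (a*(m:ℝ)*Real.exp (a*(m:ℝ)*s) * Pfull s)) := by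
      intro s
      rw [IH (m+1) (by omega) s]
      rw [show -a*(m:ℝ)*(t-s) = -(a*(m:ℝ)*t) + a*(m:ℝ)*s by push_cast; ring, Real.exp_add]
      rw [hPfull]
      field_simp
      ring
    show a * (m:ℝ) * ∫ s in (0:ℝ)..t, Real.exp (-a * (m:ℝ) * (t - s)) * Fgap a k (m+1) s = _
    rw [intervalIntegral.integral_congr (g := fun s =>
      Real.exp (-(a*(m:ℝ)*t)) * ((a*(m:ℝ))⁻¹ * (a*(m:ℝ)*Real.exp (a*(m:ℝ)*s) * Pfull s)))
      (fun s _ => hfun s)]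
    rw [intervalIntegral.integral_const_mul, intervalIntegral.integral_const_mul, hFTC, hP0]
    have hPt : P t = ∑ j ∈ range m, ((m + (k+1)).choose j : ℝ) * Real.exp (-a*t) ^ j
        * (1 - Real.exp (-a*t)) ^ (m + (k+1) - j) := by
      rw [hP]
      have h : m + (k+1) = M := by omega
      rw [h]
    rw [← hPt, Real.exp_neg]
    field_simp
    ring

lemma pinsker (s q : ℝ) (hs : 0 < s) (hsq : s ≤ q) (hq : q < 1) :
    2*(q-s)^2 ≤ s * Real.log s - s * Real.log q
      + (1-s) * Real.log (1-s) - (1-s) * Real.log (1-q) := by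
  set f : ℝ → ℝ := fun x => -s * Real.log x + (-(1-s)) * Real.log (1-x) - 2*(x-s)^2 with hf
  have hder : ∀ x, 0 < x → x < 1 → HasDerivAt f
      ((x - s) * (1 - 2*x)^2 / (x * (1-x))) x := by
    intro x hx0 hx1
    have hx1' : (1:ℝ) - x ≠ 0 := by linarith
    have h1 := (Real.hasDerivAt_log (ne_of_gt hx0)).const_mul (-s)
    have h2 := (((hasDerivAt_id x).const_sub 1).log hx1').const_mul (-(1-s))
    have h3 := (((hasDerivAt_id x).sub_const s).pow 2).const_mul (2:ℝ)
    have h := (h1.add h2).sub h3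
    refine h.congr_deriv ?_; symm
    simp only [id]
    field_simp
    ring
  have hmono : MonotoneOn f (Set.Icc s q) := by
    apply monotoneOn_of_deriv_nonneg (convex_Icc s q)
    · intro x hx
      exact (hder x (lt_of_lt_of_le hs hx.1) (lt_of_le_of_lt hx.2 hq)).continuousAt.continuousWithinAt
    · intro x hx
      rw [interior_Icc] at hx
      exact (hder x (lt_trans hs hx.1) (lt_trans hx.2 hq)).differentiableAt.differentiableWithinAt
    · intro x hx
      rw [interior_Icc] at hx
      have hx0 : 0 < x := lt_trans hs hx.1
      have hx1 : x < 1 := lt_trans hx.2 hq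
      rw [(hder x hx0 hx1).deriv]
      apply div_nonneg
      · nlinarith [sq_nonneg (1 - 2*x), hx.1]
      · nlinarith
  have key : f s ≤ f q := hmono (Set.left_mem_Icc.mpr hsq) (Set.right_mem_Icc.mpr hsq) hsq
  simp only [hf] at key
  nlinarith [key]

lemma chernoff (n m : ℕ) (hm : 1 ≤ m) (hmn : m < n) (q : ℝ)
    (hq0 : 0 < q) (hq1 : q < 1) (hsq : (m:ℝ)/(n:ℝ) ≤ q) :
    ∑ j ∈ range m, ((n-1).choose j : ℝ) * q^j * (1-q)^(n-1-j)
      ≤ Real.exp (-2*(n:ℝ)*(q - (m:ℝ)/(n:ℝ))^2) := by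
  have hn0 : (0:ℝ) < n := by
    have : 0 < n := by omega
    exact_mod_cast this
  set s : ℝ := (m:ℝ)/(n:ℝ) with hsdef
  have hs0 : 0 < s := by
    apply div_pos _ hn0
    exact_mod_cast hm
  have hs1 : s < 1 := by
    rw [hsdef, div_lt_one hn0]
    exact_mod_cast hmn
  have h1q : (0:ℝ) < 1 - q := by linarith
  have h1s : (0:ℝ) < 1 - s := by linarith
  set c : ℝ := s*(1-q)/(q*(1-s)) with hcdef
  have hc0 : 0 < c := by positivity
  have hc1 : c ≤ 1 := by
    rw [hcdef, div_le_one (by positivity)]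
    nlinarith
  have hN : ((n:ℕ) - 1 : ℕ) + 1 = n := by omega
  have hNcast : (((n:ℕ) - 1 : ℕ) : ℝ) = (n:ℝ) - 1 := by
    have : (1:ℕ) ≤ n := by omega
    push_cast [Nat.cast_sub this]
    ring
  -- Step 1: S ≤ c⁻¹^(m-1) * (c*q + (1-q))^(n-1)
  have step1 : ∑ j ∈ range m, ((n-1).choose j : ℝ) * q^j * (1-q)^(n-1-j)
      ≤ (c^(m-1))⁻¹ * (c*q + (1-q))^(n-1) := by
    have hterm : ∀ j ∈ range m, ((n-1).choose j : ℝ) * q^j * (1-q)^(n-1-j)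
        ≤ (c^(m-1))⁻¹ * (((n-1).choose j : ℝ) * (c*q)^j * (1-q)^(n-1-j)) := by
      intro j hj
      have hj' : j ≤ m - 1 := by have := mem_range.mp hj; omega
      have hcc : c^(m-1) ≤ c^j := pow_le_pow_of_le_one hc0.le hc1 hj'
      rw [mul_pow, inv_mul_eq_div, le_div_iff₀ (by positivity)]
      calc ((n-1).choose j : ℝ) * q^j * (1-q)^(n-1-j) * c^(m-1)
          ≤ ((n-1).choose j : ℝ) * q^j * (1-q)^(n-1-j) * c^j := by
            apply mul_le_mul_of_nonneg_left hcc (by positivity)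
        _ = ((n-1).choose j : ℝ) * (c^j * q^j) * (1-q)^(n-1-j) := by ring
    calc ∑ j ∈ range m, ((n-1).choose j : ℝ) * q^j * (1-q)^(n-1-j)
        ≤ ∑ j ∈ range m, (c^(m-1))⁻¹ * (((n-1).choose j : ℝ) * (c*q)^j * (1-q)^(n-1-j)) :=
          Finset.sum_le_sum hterm
      _ = (c^(m-1))⁻¹ * ∑ j ∈ range m, (((n-1).choose j : ℝ) * (c*q)^j * (1-q)^(n-1-j)) := by
          rw [Finset.mul_sum]
      _ ≤ (c^(m-1))⁻¹ * ∑ j ∈ range ((n-1)+1), (((n-1).choose j : ℝ) * (c*q)^j * (1-q)^(n-1-j)) := by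
          apply mul_le_mul_of_nonneg_left _ (by positivity)
          apply Finset.sum_le_sum_of_subset_of_nonneg
          · apply Finset.range_subset_range.mpr; omega
          · intro j _ _; positivity
      _ = (c^(m-1))⁻¹ * (c*q + (1-q))^(n-1) := by
          rw [add_pow (c*q) (1-q) (n-1)]
          congr 1
          exact Finset.sum_congr rfl (fun j _ => by ring)
  -- Step 2: exponential bound
  have hcq : c*q + (1-q) = (1-q)/(1-s) := by
    rw [hcdef]
    field_simp
    ring
  have step2 : (c^(m-1))⁻¹ * (c*q + (1-q))^(n-1) ≤ Real.exp (-2*(n:ℝ)*(q - s)^2) := by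
    have hpos : (0:ℝ) < c*q + (1-q) := by positivity
    have e1 : c^(m-1) = Real.exp (((m-1:ℕ):ℝ) * Real.log c) := by
      rw [← Real.log_pow, Real.exp_log (by positivity)]
    have e2 : (c*q + (1-q))^(n-1) = Real.exp (((n-1:ℕ):ℝ) * Real.log (c*q + (1-q))) := by
      rw [← Real.log_pow, Real.exp_log (by positivity)]
    have hm1 : ((m-1:ℕ):ℝ) = (m:ℝ)-1 := by push_cast [Nat.cast_sub hm]; ring
    rw [e1, e2, ← Real.exp_neg, ← Real.exp_add, Real.exp_le_exp, hm1, hNcast]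
    have hlogc : Real.log c = Real.log s + Real.log (1-q) - Real.log q - Real.log (1-s) := by
      rw [hcdef, Real.log_div (by positivity) (by positivity),
        Real.log_mul (by positivity) (by positivity), Real.log_mul (by positivity) (by positivity)]
      ring
    have hlogcq : Real.log (c*q + (1-q)) = Real.log (1-q) - Real.log (1-s) := by
      rw [hcq, Real.log_div (by positivity) (by positivity)]
    rw [hlogc, hlogcq]
    have hpin := pinsker s q hs0 hsq hq1
    have hns : (n:ℝ) * s = m := by
      rw [hsdef]; field_simp
    have hA : Real.log s ≤ Real.log q := Real.log_le_log hs0 hsq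
    nlinarith [mul_le_mul_of_nonneg_left hpin (le_of_lt hn0)]
  exact le_trans step1 step2

/-- Combinatorial bound `F_m^{n-1}(t) ≤ exp(-2n((e^{-aT} - m/n)₊)²)`
(Lemma 4.8/Proposition 5.1 of Lacker 2023, as used in the paper). -/
theorem Fhier_le_exp_bound (a : ℝ) (ha : 0 < a) (m n : ℕ) (hm : 1 ≤ m) (hmn : m < n)
    (T t : ℝ) (hT : 0 < T) (ht0 : 0 ≤ t) (htT : t ≤ T) :
    Fhier a m (n - 1) t
      ≤ Real.exp (-2 * (n : ℝ) *
          (max (Real.exp (-a * T) - (m : ℝ) / (n : ℝ)) 0) ^ 2) := by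
  have ha' : a ≠ 0 := ne_of_gt ha
  have hn0 : (0:ℝ) < n := by
    have : 0 < n := by omega
    exact_mod_cast this
  have hk : m + ((n-1) - m) = n - 1 := by omega
  show Fgap a ((n-1) - m) m t ≤ _
  rw [Fgap_closed a ha' ((n-1) - m) m hm t, hk]
  rcases le_or_gt (Real.exp (-a*T)) ((m:ℝ)/(n:ℝ)) with hle | hlt
  · -- trivial case: the max is 0 and the RHS is 1
    rw [max_eq_right (by linarith), show -2*(n:ℝ)*(0:ℝ)^2 = 0 by ring, Real.exp_zero]
    have hq0 : 0 ≤ Real.exp (-a*t) := (Real.exp_pos _).le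
    have hq1 : Real.exp (-a*t) ≤ 1 := by
      rw [← Real.exp_zero]
      apply Real.exp_le_exp.mpr
      nlinarith
    calc ∑ j ∈ range m, ((n-1).choose j : ℝ) * Real.exp (-a*t)^j * (1 - Real.exp (-a*t))^(n-1-j)
        ≤ ∑ j ∈ range ((n-1)+1),
            ((n-1).choose j : ℝ) * Real.exp (-a*t)^j * (1 - Real.exp (-a*t))^(n-1-j) := by
          apply Finset.sum_le_sum_of_subset_of_nonneg
          · apply Finset.range_subset_range.mpr; omega
          · intro j _ _
            have : (0:ℝ) ≤ 1 - Real.exp (-a*t) := by linarith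
            positivity
      _ = (Real.exp (-a*t) + (1 - Real.exp (-a*t)))^(n-1) := by
          rw [add_pow]
          exact Finset.sum_congr rfl (fun j _ => by ring)
      _ = 1 := by norm_num
  · rw [max_eq_left (by linarith)]
    rcases eq_or_lt_of_le ht0 with h0 | hpos
    · -- t = 0 : the sum is zero
      rw [← h0]
      have : ∑ j ∈ range m, ((n-1).choose j : ℝ) * Real.exp (-a*0)^j
          * (1 - Real.exp (-a*0))^(n-1-j) = 0 := by
        apply Finset.sum_eq_zero
        intro j hj
        have hj' : n - 1 - j ≠ 0 := by have := mem_range.mp hj; omega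
        rw [show -a*(0:ℝ) = 0 by ring, Real.exp_zero]
        simp [zero_pow hj']
      rw [this]
      positivity
    · have hq1 : Real.exp (-a*t) < 1 := by
        rw [← Real.exp_zero]
        apply Real.exp_lt_exp.mpr
        nlinarith
      have hqT : Real.exp (-a*T) ≤ Real.exp (-a*t) := by
        apply Real.exp_le_exp.mpr
        nlinarith
      have hsq : (m:ℝ)/(n:ℝ) ≤ Real.exp (-a*t) := le_trans hlt.le hqT
      calc ∑ j ∈ range m, ((n-1).choose j : ℝ) * Real.exp (-a*t)^j * (1 - Real.exp (-a*t))^(n-1-j)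
          ≤ Real.exp (-2*(n:ℝ)*(Real.exp (-a*t) - (m:ℝ)/(n:ℝ))^2) :=
            chernoff n m hm hmn (Real.exp (-a*t)) (Real.exp_pos _) hq1 hsq
        _ ≤ Real.exp (-2*(n:ℝ)*(Real.exp (-a*T) - (m:ℝ)/(n:ℝ))^2) := by
            apply Real.exp_le_exp.mpr
            have h2 : (Real.exp (-a*T) - (m:ℝ)/(n:ℝ))^2 ≤ (Real.exp (-a*t) - (m:ℝ)/(n:ℝ))^2 := by
              nlinarith
            nlinarith
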